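/- Let E = E(n,𝒟) be a fractal cube, U = ⋃_{j∈J} φ_j([0,1]^d) an island of E₁ (J ⊆ {1,…,N}), and x ∈ E a point with a coding σ = (σ_i) in which letters of J occur infinitely often. Then x is a trivial point of E. -/

import Mathlib

open Set

/-- The unit cube `[0,1]^d`. -/
def unitCube (d : ℕ) : Set (Fin d → ℝ) := {x | ∀ j, x j ∈ Icc (0:ℝ) 1}

namespace IslandAux

variable {d : ℕ}

/-- The affine map `z ↦ c • z + b` on `ℝ^d`. -/
noncomputable def aff (c : ℝ) (b : Fin d → ℝ) : (Fin d → ℝ) → (Fin d → ℝ) :=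
  fun z => c • z + b

lemma aff_apply (c : ℝ) (b z : Fin d → ℝ) (i : Fin d) :
    aff c b z i = c * z i + b i := by simp [aff]

lemma continuous_aff (c : ℝ) (b : Fin d → ℝ) : Continuous (aff (d := d) c b) := by
  unfold aff; fun_prop

/-- The affine map as a homeomorphism (for `c ≠ 0`). -/
noncomputable def affHomeo (c : ℝ) (hc : c ≠ 0) (b : Fin d → ℝ) :
    (Fin d → ℝ) ≃ₜ (Fin d → ℝ) :=
  (Homeomorph.smulOfNeZero c hc).trans (Homeomorph.addRight b)

lemma affHomeo_apply (c : ℝ) (hc : c ≠ 0) (b z : Fin d → ℝ) :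
    affHomeo c hc b z = aff c b z := rfl

lemma aff_injective {c : ℝ} (hc : c ≠ 0) (b : Fin d → ℝ) :
    Function.Injective (aff (d := d) c b) := by
  have : aff (d := d) c b = affHomeo c hc b := by
    funext z; rw [affHomeo_apply]
  rw [this]
  exact (affHomeo c hc b).injective

lemma isOpenMap_aff {c : ℝ} (hc : c ≠ 0) (b : Fin d → ℝ) :
    IsOpenMap (aff (d := d) c b) := by
  have : aff (d := d) c b = affHomeo c hc b := by
    funext z; rw [affHomeo_apply]
  rw [this]
  exact (affHomeo c hc b).isOpenMap

lemma dist_aff (c : ℝ) (b z w : Fin d → ℝ) :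
    dist (aff c b z) (aff c b w) = |c| * dist z w := by
  simp only [aff, dist_add_right, dist_smul₀, Real.norm_eq_abs]

lemma unitCube_eq_pi : unitCube d = Set.pi univ fun _ : Fin d => Icc (0:ℝ) 1 := by
  ext z
  constructor
  · intro h i _; exact h i
  · intro h j; exact h j (mem_univ j)

lemma isClosed_unitCube : IsClosed (unitCube d) := by
  rw [unitCube_eq_pi]
  exact isClosed_set_pi fun i _ => isClosed_Icc

lemma isCompact_unitCube : IsCompact (unitCube d) := by
  rw [unitCube_eq_pi]
  exact isCompact_univ_pi fun i => isCompact_Icc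

lemma isPreconnected_unitCube : IsPreconnected (unitCube d) := by
  rw [unitCube_eq_pi]
  exact (convex_pi fun i _ => convex_Icc (0:ℝ) 1).isPreconnected

lemma aff_image_unitCube {c : ℝ} (hc : 0 < c) (b : Fin d → ℝ) :
    aff c b '' unitCube d = Set.pi univ fun i => Icc (b i) (b i + c) := by
  ext z
  constructor
  · rintro ⟨y, hy, rfl⟩
    intro i _
    have h := hy i
    rw [aff_apply]
    constructor
    · nlinarith [h.1, h.2]
    · nlinarith [h.1, h.2]
  · intro hz
    refine ⟨c⁻¹ • (z - b), fun i => ?_, ?_⟩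
    · have h := hz i (mem_univ i)
      have : (c⁻¹ • (z - b)) i = c⁻¹ * (z i - b i) := by simp
      rw [this]
      constructor
      · exact mul_nonneg (by positivity) (by linarith [h.1])
      · calc c⁻¹ * (z i - b i) ≤ c⁻¹ * c :=
              mul_le_mul_of_nonneg_left (by linarith [h.2]) (by positivity)
          _ = 1 := inv_mul_cancel₀ (ne_of_gt hc)
    · funext i
      rw [aff_apply]
      have : (c⁻¹ • (z - b)) i = c⁻¹ * (z i - b i) := by simp
      rw [this]
      field_simp
      ring

lemma dist_le_one_of_mem_unitCube {z w : Fin d → ℝ} (hz : z ∈ unitCube d)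
    (hw : w ∈ unitCube d) : dist z w ≤ 1 := by
  rw [dist_pi_le_iff zero_le_one]
  intro i
  rw [Real.dist_eq, abs_sub_le_iff]
  have h1 := hz i; have h2 := hw i
  constructor <;> [linarith [h1.2, h2.1]; linarith [h2.2, h1.1]]

/-- Two distinct grid boxes at scale `c`: the closed one misses the interior
of the other. -/
lemma box_disjoint_interior {c : ℝ} (hc : 0 < c) {b b' : Fin d → ℝ}
    (hb : ∀ i, ∃ z : ℤ, b i = c * z) (hb' : ∀ i, ∃ z : ℤ, b' i = c * z)
    (hne : b ≠ b') :
    (Set.pi univ fun i => Icc (b i) (b i + c)) ∩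
      interior (Set.pi univ fun i => Icc (b' i) (b' i + c)) = ∅ := by
  have hint : interior (Set.pi univ fun i => Icc (b' i) (b' i + c)) =
      Set.pi univ fun i => Ioo (b' i) (b' i + c) := by
    rw [interior_pi_set finite_univ]
    simp [interior_Icc]
  rw [hint]
  obtain ⟨i, hi⟩ : ∃ i, b i ≠ b' i := by
    by_contra h
    push_neg at h
    exact hne (funext h)
  ext z
  simp only [Set.mem_inter_iff, Set.mem_pi, mem_univ, forall_true_left, mem_empty_iff_false,
    iff_false, not_and]
  intro h1 h2
  have hI1 := h1 i
  have hI2 := h2 i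
  rw [mem_Icc] at hI1
  rw [mem_Ioo] at hI2
  obtain ⟨m, hm⟩ := hb i
  obtain ⟨m', hm'⟩ := hb' i
  have hmm : m ≠ m' := by
    intro h; apply hi; rw [hm, hm', h]
  rcases lt_or_gt_of_ne hmm with h | h
  · have : (m : ℝ) + 1 ≤ m' := by exact_mod_cast Int.add_one_le_of_lt h
    have : b i + c ≤ b' i := by rw [hm, hm']; nlinarith
    have := hI1.2; have := hI2.1; linarith
  · have : (m' : ℝ) + 1 ≤ m := by exact_mod_cast Int.add_one_le_of_lt h
    have : b' i + c ≤ b i := by rw [hm, hm']; nlinarith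
    have := hI1.1; have := hI2.2; linarith

end IslandAux

open IslandAux

/-- Composition of the maps `φ` along a word. -/
def Phi {d N : ℕ} (φ : Fin N → (Fin d → ℝ) → (Fin d → ℝ)) :
    List (Fin N) → (Fin d → ℝ) → (Fin d → ℝ) :=
  fun w => w.foldr (fun j f => φ j ∘ f) id

lemma Phi_append {d N : ℕ} (φ : Fin N → (Fin d → ℝ) → (Fin d → ℝ)) (u v : List (Fin N)) :
    Phi φ (u ++ v) = Phi φ u ∘ Phi φ v := by
  induction u with
  | nil => rfl
  | cons j u ih =>
    show φ j ∘ Phi φ (u ++ v) = (φ j ∘ Phi φ u) ∘ Phi φ v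
    rw [ih]
    rfl


theorem trivial_point_of_island_coding
    (d n N : ℕ) (hn : 2 ≤ n)
    (D : Fin N → (Fin d → ℝ))
    (hD : ∀ j i, ∃ m : ℕ, m < n ∧ D j i = (m : ℝ))
    (φ : Fin N → (Fin d → ℝ) → (Fin d → ℝ))
    (hφ : ∀ j x, φ j x = (n : ℝ)⁻¹ • (x + D j))
    (E : Set (Fin d → ℝ)) (hEne : E.Nonempty) (hEc : IsCompact E)
    (hE : E = ⋃ j, φ j '' E)
    -- `U = ⋃_{j ∈ J} φ_j([0,1]^d)` is an island of the first approximation `E₁`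
    (J : Finset (Fin N)) (U : Set (Fin d → ℝ))
    (hU : U = ⋃ j ∈ J, φ j '' unitCube d)
    (hUcomp : ∃ y ∈ (⋃ j, φ j '' unitCube d),
      U = connectedComponentIn (⋃ j, φ j '' unitCube d) y)
    (hUisland : U ∩ frontier (unitCube d) = ∅)
    -- `x ∈ E` has a coding in which letters of `J` occur infinitely often
    (x : Fin d → ℝ) (hx : x ∈ E) (σ : ℕ → Fin N)
    (hcoding : (⋂ k : ℕ, ((List.ofFn (fun i : Fin k => σ i)).foldr
        (fun j f => φ j ∘ f) id) '' E) = {x})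
    (hinf : ∀ m : ℕ, ∃ k ≥ m, σ k ∈ J) :
    connectedComponentIn E x = {x} := by
  classical
  have hnR : (1:ℝ) < (n:ℝ) := by exact_mod_cast Nat.lt_of_lt_of_le one_lt_two hn
  have hn0 : (0:ℝ) < n := lt_trans one_pos hnR
  have hnne : (n:ℝ) ≠ 0 := ne_of_gt hn0
  have hinv0 : (0:ℝ) < (n:ℝ)⁻¹ := by positivity
  have hinv1 : (n:ℝ)⁻¹ < 1 := by
    have h1 : (n:ℝ)⁻¹ * n = 1 := inv_mul_cancel₀ hnne
    nlinarith
  have hφa : ∀ j, φ j = aff (n:ℝ)⁻¹ ((n:ℝ)⁻¹ • D j) := by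
    intro j
    funext z
    rw [hφ]
    simp [aff, smul_add]
  have hφc : ∀ j, Continuous (φ j) := by
    intro j
    rw [hφa j]
    exact continuous_aff _ _
  set E₁ : Set (Fin d → ℝ) := ⋃ j, φ j '' unitCube d with hE₁def
  have hpiece_cl : ∀ j : Fin N, IsClosed (φ j '' unitCube d) :=
    fun j => (isCompact_unitCube.image (hφc j)).isClosed
  have hE₁comp : IsCompact E₁ := by
    rw [hE₁def]
    exact isCompact_iUnion fun j => isCompact_unitCube.image (hφc j)
  have hφcube : ∀ j : Fin N, φ j '' unitCube d ⊆ unitCube d := by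
    rintro j _ ⟨z, hz, rfl⟩ i
    obtain ⟨m, hm, hDji⟩ := hD j i
    have hz1 := hz i
    rw [mem_Icc] at hz1
    have hφz : φ j z i = (n:ℝ)⁻¹ * (z i + m) := by rw [hφ]; simp [hDji]
    rw [mem_Icc, hφz]
    have hmn : (m:ℝ) + 1 ≤ (n:ℝ) := by exact_mod_cast Nat.succ_le_of_lt hm
    have hm0 : (0:ℝ) ≤ m := Nat.cast_nonneg m
    constructor
    · exact mul_nonneg (le_of_lt hinv0) (by linarith)
    · calc (n:ℝ)⁻¹ * (z i + m) ≤ (n:ℝ)⁻¹ * n :=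
            mul_le_mul_of_nonneg_left (by linarith) (le_of_lt hinv0)
        _ = 1 := inv_mul_cancel₀ hnne
  have hE₁cube : E₁ ⊆ unitCube d := by
    rw [hE₁def]
    exact iUnion_subset hφcube
  -- `E` is contained in the unit cube
  have hEbound : ∃ t : ℝ, 0 ≤ t ∧ ∀ y ∈ E, ∀ i, y i ∈ Icc (-t) (1+t) := by
    obtain ⟨R, hR⟩ := hEc.isBounded.subset_closedBall 0
    refine ⟨max R 0, le_max_right _ _, fun y hy i => ?_⟩
    have h1 : ‖y‖ ≤ R := by
      have := hR hy
      rwa [Metric.mem_closedBall, dist_zero_right] at this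
    have h2 : |y i| ≤ R := le_trans (norm_le_pi_norm y i) h1
    have h3 : |y i| ≤ max R 0 := le_trans h2 (le_max_left _ _)
    rw [abs_le] at h3
    rw [mem_Icc]
    constructor <;> linarith [h3.1, h3.2]
  have hstep : ∀ t : ℝ, 0 ≤ t → (∀ y ∈ E, ∀ i, y i ∈ Icc (-t) (1+t)) →
      ∀ y ∈ E, ∀ i, y i ∈ Icc (-(t/n)) (1+t/n) := by
    intro t ht hInd y hy i
    rw [hE] at hy
    simp only [mem_iUnion, mem_image] at hy
    obtain ⟨j, z, hz, rfl⟩ := hy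
    obtain ⟨m, hm, hDji⟩ := hD j i
    have hzi := hInd z hz i
    rw [mem_Icc] at hzi
    have hφz : φ j z i = (n:ℝ)⁻¹ * (z i + m) := by rw [hφ]; simp [hDji]
    rw [mem_Icc, hφz]
    have hmn : (m:ℝ) + 1 ≤ (n:ℝ) := by exact_mod_cast Nat.succ_le_of_lt hm
    have hm0 : (0:ℝ) ≤ m := Nat.cast_nonneg m
    constructor
    · have h1 : (n:ℝ)⁻¹ * (-t) ≤ (n:ℝ)⁻¹ * (z i + m) :=
        mul_le_mul_of_nonneg_left (by linarith) (le_of_lt hinv0)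
      have h2 : (n:ℝ)⁻¹ * (-t) = -(t/n) := by field_simp
      linarith
    · have h1 : (n:ℝ)⁻¹ * (z i + m) ≤ (n:ℝ)⁻¹ * ((n:ℝ) + t) :=
        mul_le_mul_of_nonneg_left (by linarith) (le_of_lt hinv0)
      have h2 : (n:ℝ)⁻¹ * ((n:ℝ) + t) = 1 + t/n := by field_simp
      linarith
  obtain ⟨t, ht, htE⟩ := hEbound
  have hiter : ∀ k : ℕ, ∀ y ∈ E, ∀ i, y i ∈ Icc (-(t / n^k)) (1 + t/n^k) := by
    intro k
    induction k with
    | zero => simpa using htE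
    | succ k ih =>
      intro y hy i
      have h := hstep (t / n^k) (by positivity) ih y hy i
      rwa [div_div, ← pow_succ] at h
  have hEcube : E ⊆ unitCube d := by
    intro y hy i
    rw [mem_Icc]
    constructor
    · by_contra h
      push_neg at h
      have hpos : (0:ℝ) < -(y i) := by linarith
      obtain ⟨k, hk⟩ := pow_unbounded_of_one_lt (t / (-(y i))) hnR
      have h1 := (hiter k y hy i).1
      have h2 : t < (n:ℝ)^k * (-(y i)) := by
        have := (div_lt_iff₀ hpos).mp hk
        linarith
      have h3 : t / (n:ℝ)^k < -(y i) := by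
        rw [div_lt_iff₀ (by positivity : (0:ℝ) < (n:ℝ)^k)]
        linarith
      linarith
    · by_contra h
      push_neg at h
      have hpos : (0:ℝ) < y i - 1 := by linarith
      obtain ⟨k, hk⟩ := pow_unbounded_of_one_lt (t / (y i - 1)) hnR
      have h1 := (hiter k y hy i).2
      have h2 : t < (n:ℝ)^k * (y i - 1) := by
        have := (div_lt_iff₀ hpos).mp hk
        linarith
      have h3 : t / (n:ℝ)^k < y i - 1 := by
        rw [div_lt_iff₀ (by positivity : (0:ℝ) < (n:ℝ)^k)]
        linarith
      linarith
  have hEE₁ : E ⊆ E₁ := by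
    intro y hy
    rw [hE] at hy
    simp only [mem_iUnion, mem_image] at hy
    obtain ⟨j, z, hz, rfl⟩ := hy
    rw [hE₁def]
    exact mem_iUnion.mpr ⟨j, ⟨z, hEcube hz, rfl⟩⟩
  -- form of the composed maps
  have hform : ∀ w : List (Fin N), ∃ b : Fin d → ℝ,
      Phi φ w = aff ((n:ℝ)⁻¹ ^ w.length) b ∧
      ∀ i, ∃ z : ℤ, b i = (n:ℝ)⁻¹ ^ w.length * z := by
    intro w
    induction w with
    | nil =>
      refine ⟨0, ?_, fun i => ⟨0, by simp⟩⟩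
      funext z
      simp [Phi, aff]
    | cons j w ih =>
      obtain ⟨b, hb, hbz⟩ := ih
      refine ⟨(n:ℝ)⁻¹ • (b + D j), ?_, ?_⟩
      · funext z i
        have h1 : Phi φ (j :: w) z = φ j (Phi φ w z) := rfl
        rw [h1, hb, hφ]
        have h2 : aff ((n:ℝ)⁻¹ ^ w.length) b z i = (n:ℝ)⁻¹ ^ w.length * z i + b i :=
          aff_apply _ _ _ _
        simp only [Pi.smul_apply, Pi.add_apply, smul_eq_mul, aff_apply, h2,
          List.length_cons, pow_succ]
        ring
      · intro i
        obtain ⟨zz, hzz⟩ := hbz i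
        obtain ⟨m, hm, hDji⟩ := hD j i
        refine ⟨zz + (n:ℤ)^w.length * m, ?_⟩
        rw [Pi.smul_apply, Pi.add_apply, hzz, hDji]
        simp only [List.length_cons, smul_eq_mul]
        push_cast
        rw [pow_succ]
        field_simp
        have hp : (1 / (n:ℝ)) ^ w.length * (n:ℝ) ^ w.length = 1 := by
          rw [← mul_pow, one_div, inv_mul_cancel₀ hnne, one_pow]
        linear_combination (-(m:ℝ)) * hp
  -- covering of E by level-k pieces
  have hcover : ∀ k : ℕ, ∀ y ∈ E, ∃ v : Fin k → Fin N,
      y ∈ Phi φ (List.ofFn v) '' E₁ := by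
    intro k
    induction k with
    | zero =>
      intro y hy
      refine ⟨Fin.elim0, ?_⟩
      have h0 : List.ofFn (Fin.elim0 : Fin 0 → Fin N) = [] := by simp
      rw [h0]
      simpa [Phi] using hEE₁ hy
    | succ k ih =>
      intro y hy
      rw [hE] at hy
      simp only [mem_iUnion, mem_image] at hy
      obtain ⟨j, z, hz, rfl⟩ := hy
      obtain ⟨v, hv⟩ := ih z hz
      obtain ⟨u, hu, huz⟩ := hv
      refine ⟨Fin.cons j v, ?_⟩
      have hofn : List.ofFn (Fin.cons j v : Fin (k+1) → Fin N) = j :: List.ofFn v := by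
        simp [List.ofFn_succ]
      rw [hofn]
      refine ⟨u, hu, ?_⟩
      show φ j (Phi φ (List.ofFn v) u) = φ j z
      rw [huz]
  -- membership of x in the pieces of its coding
  have hxiInter : x ∈ ⋂ k : ℕ, ((List.ofFn fun i : Fin k => σ i).foldr
      (fun j f => φ j ∘ f) id) '' E := by
    rw [hcoding]
    exact rfl
  have hxmem : ∀ k : ℕ, x ∈ Phi φ (List.ofFn fun i : Fin k => σ i) '' E :=
    fun k => mem_iInter.mp hxiInter k
  have hsplit : ∀ k : ℕ, List.ofFn (fun i : Fin (k+1) => σ i) =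
      (List.ofFn fun i : Fin k => σ i) ++ [σ k] := by
    intro k
    rw [List.ofFn_succ', List.concat_eq_append]
    simp
  -- U facts
  have hUE₁ : U ⊆ E₁ := by
    rw [hU, hE₁def]
    exact iUnion₂_subset fun j _ => subset_iUnion (fun j => φ j '' unitCube d) j
  have hUcompact : IsCompact U := by
    rw [hU]
    exact (Set.finite_mem_finset J).isCompact_biUnion
      fun j _ => isCompact_unitCube.image (hφc j)
  have hUcube : U ⊆ unitCube d := fun z hz => hE₁cube (hUE₁ hz)
  have hxU : ∀ k : ℕ, σ k ∈ J →
      x ∈ Phi φ (List.ofFn fun i : Fin k => σ i) '' U := by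
    intro k hk
    have h1 := hxmem (k+1)
    rw [hsplit k, Phi_append, Set.image_comp] at h1
    have hsub : Phi φ [σ k] '' E ⊆ U := by
      rintro _ ⟨u, hu, rfl⟩
      show φ (σ k) u ∈ U
      rw [hU]
      exact mem_biUnion hk ⟨u, hEcube hu, rfl⟩
    exact image_mono hsub h1
  obtain ⟨y₀, hy₀, hUcc⟩ := hUcomp
  have hpiece_conn : ∀ j : Fin N, IsPreconnected (φ j '' unitCube d) :=
    fun j => isPreconnected_unitCube.image _ (hφc j).continuousOn
  have hgood : ∀ j : Fin N, (φ j '' unitCube d ∩ U).Nonempty →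
      φ j '' unitCube d ⊆ U := by
    rintro j ⟨z, hz1, hz2⟩
    rw [hUcc] at hz2 ⊢
    rw [connectedComponentIn_eq hz2]
    refine (hpiece_conn j).subset_connectedComponentIn hz1 ?_
    rw [hE₁def]
    exact subset_iUnion (fun j => φ j '' unitCube d) j
  have hUopen : ∃ O : Set (Fin d → ℝ), IsOpen O ∧ O ∩ E₁ = U := by
    refine ⟨(⋃ j ∈ {j : Fin N | ¬ φ j '' unitCube d ⊆ U}, φ j '' unitCube d)ᶜ, ?_, ?_⟩
    · rw [isOpen_compl_iff]
      exact (Set.toFinite _).isClosed_biUnion fun j _ => hpiece_cl j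
    · apply Subset.antisymm
      · rintro z ⟨hzc, hzE⟩
        rw [hE₁def] at hzE
        obtain ⟨j, hzj⟩ := mem_iUnion.mp hzE
        by_cases hj : φ j '' unitCube d ⊆ U
        · exact hj hzj
        · exact absurd (mem_iUnion₂.mpr ⟨j, hj, hzj⟩) hzc
      · intro z hz
        refine ⟨?_, hUE₁ hz⟩
        intro hzB
        obtain ⟨j, hj, hzj⟩ := mem_iUnion₂.mp hzB
        exact hj (hgood j ⟨z, hzj, hz⟩)
  have hUint : U ⊆ interior (unitCube d) := by
    intro z hz
    have h1 : z ∈ unitCube d := hE₁cube (hUE₁ hz)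
    have h2 : z ∉ frontier (unitCube d) := fun h =>
      (eq_empty_iff_forall_notMem.mp hUisland z) ⟨hz, h⟩
    by_contra hint
    exact h2 (by rw [isClosed_unitCube.frontier_eq]; exact ⟨h1, hint⟩)
  obtain ⟨O, hOopen, hOE₁⟩ := hUopen
  -- the key inclusion
  have hCsub : ∀ k : ℕ, σ k ∈ J → connectedComponentIn E x ⊆
      Phi φ (List.ofFn fun i : Fin k => σ i) '' U := by
    intro k hk
    set w : List (Fin N) := List.ofFn fun i : Fin k => σ i with hwdef
    obtain ⟨b, hb, hbz⟩ := hform w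
    have hwlen : w.length = k := by rw [hwdef]; exact List.length_ofFn
    rw [hwlen] at hb hbz
    have hc0 : (0:ℝ) < (n:ℝ)⁻¹ ^ k := by positivity
    have hcne : ((n:ℝ)⁻¹ ^ k) ≠ 0 := ne_of_gt hc0
    set A : Set (Fin d → ℝ) := Phi φ w '' U with hAdef
    have hxA : x ∈ A := hxU k hk
    have hΦcont : Continuous (Phi φ w) := by rw [hb]; exact continuous_aff _ _
    have hAcomp : IsCompact A := hUcompact.image hΦcont
    have hAbox : A ⊆ interior (Phi φ w '' unitCube d) := by
      have h1 : Phi φ w '' U ⊆ Phi φ w '' interior (unitCube d) := image_mono hUint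
      have h2 : IsOpen (Phi φ w '' interior (unitCube d)) := by
        rw [hb]
        exact isOpenMap_aff hcne b _ isOpen_interior
      exact h1.trans (interior_maximal (image_mono interior_subset) h2)
    set T : Set (Fin d → ℝ) :=
      ⋃ v ∈ {v : Fin k → Fin N | Phi φ (List.ofFn v) ≠ Phi φ w},
        Phi φ (List.ofFn v) '' E₁ with hTdef
    have hTclosed : IsClosed T := by
      apply (Set.toFinite _).isClosed_biUnion
      intro v _
      obtain ⟨bv, hbv, _⟩ := hform (List.ofFn v)
      have hcv : Continuous (Phi φ (List.ofFn v)) := by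
        rw [hbv]; exact continuous_aff _ _
      exact (hE₁comp.image hcv).isClosed
    have hAT : ∀ z ∈ A, z ∉ T := by
      intro z hzA hzT
      obtain ⟨v, hv, hzv⟩ := mem_iUnion₂.mp hzT
      obtain ⟨bv, hbv, hbvz⟩ := hform (List.ofFn v)
      rw [List.length_ofFn] at hbv hbvz
      have hbne : bv ≠ b := by
        intro h
        exact hv (by rw [hbv, hb, h])
      have h1 : z ∈ Set.pi univ fun i => Icc (bv i) (bv i + (n:ℝ)⁻¹ ^ k) := by
        rw [← aff_image_unitCube hc0 bv, ← hbv]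
        exact image_mono hE₁cube hzv
      have h2 : z ∈ interior (Set.pi univ fun i => Icc (b i) (b i + (n:ℝ)⁻¹ ^ k)) := by
        rw [← aff_image_unitCube hc0 b, ← hb]
        exact hAbox hzA
      have hdisj := box_disjoint_interior hc0 hbvz hbz hbne
      exact absurd (mem_inter h1 h2) (by rw [hdisj]; exact notMem_empty z)
    set V : Set (Fin d → ℝ) := (Phi φ w '' O) \ T with hVdef
    have hVopen : IsOpen V := by
      apply IsOpen.sdiff _ hTclosed
      rw [hb]
      exact isOpenMap_aff hcne b O hOopen
    have hVE : ∀ z ∈ E, (z ∈ V ↔ z ∈ A) := by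
      intro z hzE
      constructor
      · rintro ⟨⟨u, huO, huz⟩, hzT⟩
        obtain ⟨v, hv⟩ := hcover k z hzE
        by_cases hveq : Phi φ (List.ofFn v) = Phi φ w
        · rw [hveq] at hv
          obtain ⟨u', hu', hu'z⟩ := hv
          have heq : Phi φ w u' = Phi φ w u := by rw [hu'z, huz]
          rw [hb] at heq
          have huu : u' = u := aff_injective hcne b heq
          refine ⟨u, ?_, huz⟩
          rw [← hOE₁]
          exact ⟨huO, huu ▸ hu'⟩
        · exact absurd (mem_iUnion₂.mpr ⟨v, hveq, hv⟩) hzT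
      · intro hzA
        refine ⟨?_, hAT z hzA⟩
        obtain ⟨u, huU, huz⟩ := hzA
        have huO : u ∈ O := by
          have : u ∈ O ∩ E₁ := by rw [hOE₁]; exact huU
          exact this.1
        exact ⟨u, huO, huz⟩
    have hxA' : (⟨x, hx⟩ : E) ∈ (Subtype.val ⁻¹' A : Set E) := hxA
    have hclopen : IsClopen (Subtype.val ⁻¹' A : Set E) := by
      constructor
      · exact hAcomp.isClosed.preimage continuous_subtype_val
      · have hpre : (Subtype.val ⁻¹' A : Set E) = Subtype.val ⁻¹' V := by
          ext ⟨z, hz⟩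
          simp only [mem_preimage]
          exact (hVE z hz).symm
        rw [hpre]
        exact hVopen.preimage continuous_subtype_val
    have hsub := hclopen.connectedComponent_subset hxA'
    rw [connectedComponentIn_eq_image hx]
    rintro _ ⟨z', hz', rfl⟩
    exact hsub hz'
  -- conclusion
  have hdist : ∀ y ∈ connectedComponentIn E x, ∀ k, σ k ∈ J →
      dist y x ≤ (n:ℝ)⁻¹ ^ k := by
    intro y hy k hk
    obtain ⟨b, hb, _⟩ := hform (List.ofFn fun i : Fin k => σ i)
    rw [List.length_ofFn] at hb
    obtain ⟨a, haU, haz⟩ := hCsub k hk hy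
    obtain ⟨a', ha'U, ha'z⟩ := hxU k hk
    rw [← haz, ← ha'z, hb, dist_aff]
    have h1 : dist a a' ≤ 1 :=
      dist_le_one_of_mem_unitCube (hUcube haU) (hUcube ha'U)
    have habs : |((n:ℝ)⁻¹ ^ k)| = (n:ℝ)⁻¹ ^ k := abs_of_pos (by positivity)
    rw [habs]
    calc (n:ℝ)⁻¹ ^ k * dist a a' ≤ (n:ℝ)⁻¹ ^ k * 1 :=
          mul_le_mul_of_nonneg_left h1 (by positivity)
      _ = (n:ℝ)⁻¹ ^ k := mul_one _
  apply Subset.antisymm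
  · intro y hy
    have h0 : dist y x = 0 := by
      by_contra h
      have hpos : 0 < dist y x := lt_of_le_of_ne dist_nonneg (Ne.symm h)
      obtain ⟨m, hm⟩ := exists_pow_lt_of_lt_one hpos hinv1
      obtain ⟨k, hkm, hkJ⟩ := hinf m
      have h2 := hdist y hy k hkJ
      have h3 : (n:ℝ)⁻¹ ^ k ≤ (n:ℝ)⁻¹ ^ m :=
        pow_le_pow_of_le_one (le_of_lt hinv0) (le_of_lt hinv1) hkm
      linarith
    rw [mem_singleton_iff]
    exact eq_of_dist_eq_zero h0
  · intro y hy
    rw [mem_singleton_iff] at hy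
    subst hy
    exact mem_connectedComponentIn hx
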